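/- arXiv:2506.13609 — 2 statements merged into one kernel-verified Lean document; each statement's English description precedes it below -/
import Mathlib

section
/- Let K be a convex subset of R^n with diameter D, and let l_1,...,l_T be convex functions on K whose (sub)gradients are bounded in Euclidean norm by G on K. Then the iterates v_1,...,v_T of projected online gradient descent with step sizes η_t = D/(G√t) satisfy, for every v ∈ K, (1/T)·Σ_{t=1}^T l_t(v_t) − (1/T)·Σ_{t=1}^T l_t(v) ≤ 3DG/(2√T). -/
open scoped RealInnerProductSpace BigOperators

lemma sum_inv_sqrt_le (T : ℕ) :
    ∑ t ∈ Finset.Icc 1 T, (1 / Real.sqrt t) ≤ 2 * Real.sqrt T := by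
  induction T with
  | zero => simp
  | succ T ih =>
    rw [Finset.sum_Icc_succ_top (by omega : 1 ≤ T + 1)]
    have hs' : (0:ℝ) < Real.sqrt (T+1) := Real.sqrt_pos.mpr (by positivity)
    have hsq : Real.sqrt ((T:ℝ)+1) * Real.sqrt ((T:ℝ)+1) = (T:ℝ)+1 :=
      Real.mul_self_sqrt (by positivity)
    have hkey : Real.sqrt (T:ℝ) * Real.sqrt ((T:ℝ)+1) ≤ (T:ℝ) + 1/2 := by
      rw [← Real.sqrt_mul_self (by linarith : (0:ℝ) ≤ (T:ℝ)+1/2)]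
      calc Real.sqrt (T:ℝ) * Real.sqrt ((T:ℝ)+1) = Real.sqrt ((T:ℝ)*((T:ℝ)+1)) := by
            rw [Real.sqrt_mul (Nat.cast_nonneg T)]
        _ ≤ _ := Real.sqrt_le_sqrt (by nlinarith)
    have h1 : 1 / Real.sqrt ((T:ℝ)+1) ≤ 2 * Real.sqrt ((T:ℝ)+1) - 2 * Real.sqrt (T:ℝ) := by
      rw [div_le_iff₀ hs']
      nlinarith
    push_cast
    linarith

lemma tele_sum (a c : ℕ → ℝ) (D2 : ℝ)
    (ha0 : ∀ t, 0 ≤ a t) (haD : ∀ t, a t ≤ D2)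
    (hc0 : ∀ t, 0 ≤ c t) (hmono : ∀ t, c t ≤ c (t+1)) :
    ∀ T, 1 ≤ T →
      ∑ t ∈ Finset.Icc 1 T, c t * (a t - a (t+1)) + c T * a (T+1) ≤ D2 * c T := by
  intro T hT
  induction T, hT using Nat.le_induction with
  | base => simp; nlinarith [hc0 1, ha0 1, haD 1, ha0 2]
  | succ T hT ih =>
    rw [Finset.sum_Icc_succ_top (by omega : 1 ≤ T + 1)]
    have h1 : (c (T+1) - c T) * a (T+1) ≤ (c (T+1) - c T) * D2 := by
      apply mul_le_mul_of_nonneg_left (haD _) (by linarith [hmono T])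
    nlinarith [ha0 (T+1), ha0 (T+2)]

lemma proj_obtuse {E : Type*} [NormedAddCommGroup E] [InnerProductSpace ℝ E]
    {K : Set E} (hK : Convex ℝ K) {p y u : E} (hp : p ∈ K) (hu : u ∈ K)
    (hmin : ∀ w ∈ K, ‖p - y‖ ≤ ‖w - y‖) : ‖u - p‖ ^ 2 ≤ ‖u - y‖ ^ 2 := by
  haveI : Nonempty K := ⟨⟨p, hp⟩⟩
  have hinf : ‖y - p‖ = ⨅ w : K, ‖y - w‖ := by
    apply le_antisymm
    · apply le_ciInf; intro w
      rw [norm_sub_rev y p, norm_sub_rev y (w:E)]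
      exact hmin w w.2
    · refine ciInf_le ⟨(0:ℝ), ?_⟩ (⟨p, hp⟩ : K)
      rintro x ⟨w, rfl⟩
      exact norm_nonneg _
  have hin : ⟪y - p, u - p⟫ ≤ 0 :=
    (norm_eq_iInf_iff_real_inner_le_zero hK hp).mp hinf u hu
  have hexp : ‖u - y‖ ^ 2 = ‖u - p‖ ^ 2 + 2 * ⟪u - p, p - y⟫ + ‖p - y‖ ^ 2 := by
    rw [← norm_add_sq_real]; congr 1; abel
  have h2 : ⟪u - p, p - y⟫ = - ⟪y - p, u - p⟫ := by
    rw [real_inner_comm, ← inner_neg_left]; congr 1; abel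
  nlinarith [sq_nonneg ‖p - y‖]

/-- **Online gradient descent regret bound.**
`K` is a convex set of diameter at most `D`, `l t` are convex losses on `K` with
subgradients `g t` at the iterates `v t`, bounded in norm by `G`. The iterates follow
projected online gradient descent with step sizes `η t = D / (G * √t)`:
`v (t+1)` is the Euclidean projection of `v t - η t • g t` onto `K`.
Then the average regret against any `v ∈ K` is at most `3*D*G/(2*√T)`. -/
theorem ogd_regret
    {n : ℕ} (K : Set (EuclideanSpace ℝ (Fin n))) (hK : Convex ℝ K)
    (D G : ℝ) (hD : 0 < D) (hG : 0 < G)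
    (hdiam : ∀ u ∈ K, ∀ w ∈ K, ‖u - w‖ ≤ D)
    (T : ℕ) (hT : 0 < T)
    (l : ℕ → EuclideanSpace ℝ (Fin n) → ℝ)
    (hconv : ∀ t ∈ Finset.Icc 1 T, ConvexOn ℝ K (l t))
    (v : ℕ → EuclideanSpace ℝ (Fin n))
    (hv : ∀ t, v t ∈ K)
    (g : ℕ → EuclideanSpace ℝ (Fin n))
    (hgrad : ∀ t ∈ Finset.Icc 1 T, ∀ u ∈ K, l t (v t) + ⟪g t, u - v t⟫ ≤ l t u)
    (hGbound : ∀ t ∈ Finset.Icc 1 T, ‖g t‖ ≤ G)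
    (η : ℕ → ℝ) (hη : ∀ t, η t = D / (G * Real.sqrt t))
    (hproj : ∀ t ∈ Finset.Icc 1 T,
      ∀ u ∈ K, ‖v (t + 1) - (v t - η t • g t)‖ ≤ ‖u - (v t - η t • g t)‖) :
    ∀ u ∈ K,
      (1 / (T : ℝ)) * ∑ t ∈ Finset.Icc 1 T, l t (v t)
        - (1 / (T : ℝ)) * ∑ t ∈ Finset.Icc 1 T, l t u
      ≤ 3 * D * G / (2 * Real.sqrt T) := by
  intro u hu
  set a : ℕ → ℝ := fun t => ‖v t - u‖ ^ 2 with ha_def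
  set c : ℕ → ℝ := fun t => G * Real.sqrt t / (2 * D) with hc_def
  -- basic facts about a and c
  have ha0 : ∀ t, 0 ≤ a t := fun t => sq_nonneg _
  have haD : ∀ t, a t ≤ D ^ 2 := fun t =>
    pow_le_pow_left₀ (norm_nonneg _) (hdiam (v t) (hv t) u hu) 2
  have hc0 : ∀ t, 0 ≤ c t := fun t => by
    have := Real.sqrt_nonneg (t : ℝ); positivity
  have hcmono : ∀ t, c t ≤ c (t + 1) := fun t => by
    have hcast : ((t + 1 : ℕ) : ℝ) = (t : ℝ) + 1 := by push_cast; ring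
    simp only [hc_def, hcast]
    have hs : Real.sqrt (t : ℝ) ≤ Real.sqrt ((t : ℝ) + 1) :=
      Real.sqrt_le_sqrt (by linarith)
    have h2D : (0:ℝ) < 2 * D := by linarith
    apply (div_le_div_iff_of_pos_right h2D).mpr <;> try exact ?_
    exact mul_le_mul_of_nonneg_left hs (le_of_lt hG)
  -- per-step bound
  have key : ∀ t ∈ Finset.Icc 1 T,
      l t (v t) - l t u ≤ c t * (a t - a (t + 1)) + η t * G ^ 2 / 2 := by
    intro t ht
    obtain ⟨ht1, ht2⟩ := Finset.mem_Icc.mp ht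
    have hst : (0:ℝ) < Real.sqrt t := Real.sqrt_pos.mpr (by exact_mod_cast ht1)
    have hηpos : 0 < η t := by rw [hη t]; positivity
    have hηc : η t * (2 * c t) = 1 := by
      rw [hη t, hc_def]
      field_simp
    -- projection step
    have hpr : a (t + 1) ≤ ‖u - (v t - η t • g t)‖ ^ 2 := by
      have := proj_obtuse hK (hv (t+1)) hu (fun w hw => hproj t ht w hw)
      calc a (t+1) = ‖u - v (t+1)‖ ^ 2 := by rw [norm_sub_rev]
        _ ≤ _ := this
    have hexp : ‖u - (v t - η t • g t)‖ ^ 2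
        = a t + 2 * (η t * ⟪g t, u - v t⟫) + η t ^ 2 * ‖g t‖ ^ 2 := by
      have : u - (v t - η t • g t) = (u - v t) + η t • g t := by abel
      rw [this, norm_add_sq_real, norm_smul, real_inner_smul_right]
      rw [real_inner_comm (u - v t) (g t)]
      have : ‖v t - u‖ = ‖u - v t‖ := norm_sub_rev _ _
      simp only [ha_def, this, Real.norm_eq_abs, abs_of_pos hηpos, mul_pow]
    have hg2 : ‖g t‖ ^ 2 ≤ G ^ 2 :=
      pow_le_pow_left₀ (norm_nonneg _) (hGbound t ht) 2
    have hinner : l t (v t) - l t u ≤ - ⟪g t, u - v t⟫ := by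
      have := hgrad t ht u hu
      linarith
    -- combine: a(t+1) ≤ a t + 2 η ⟪g, u - v t⟫ + η² G²
    have hstep : - ⟪g t, u - v t⟫ ≤ c t * (a t - a (t+1)) + η t * G ^ 2 / 2 := by
      have h3 : a (t+1) ≤ a t + 2 * (η t * ⟪g t, u - v t⟫) + η t ^ 2 * G ^ 2 := by
        rw [hexp] at hpr
        nlinarith [sq_nonneg (η t)]
      -- multiply through by 2 c t  > 0 …  use η t * (2 c t) = 1
      have hcpos : 0 < c t := by
        simp only [hc_def]; positivity
      have hmul := mul_le_mul_of_nonneg_left h3 (le_of_lt hcpos)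
      have e1 : c t * η t = 1/2 := by linear_combination hηc / 2
      have e2 : c t * (a t + 2 * (η t * ⟪g t, u - v t⟫) + η t ^ 2 * G ^ 2)
          = c t * a t + ⟪g t, u - v t⟫ + η t * G ^ 2 / 2 := by
        linear_combination (2 * ⟪g t, u - v t⟫ + η t * G ^ 2) * e1
      rw [e2] at hmul
      nlinarith [hmul, e1]
    linarith
  -- sum up
  have hsum : ∑ t ∈ Finset.Icc 1 T, (l t (v t) - l t u)
      ≤ ∑ t ∈ Finset.Icc 1 T, (c t * (a t - a (t+1)) + η t * G ^ 2 / 2) :=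
    Finset.sum_le_sum key
  have htele : ∑ t ∈ Finset.Icc 1 T, c t * (a t - a (t+1)) ≤ D * G * Real.sqrt T / 2 := by
    have h := tele_sum a c (D^2) ha0 haD hc0 hcmono T hT
    have hcT : D ^ 2 * c T = D * G * Real.sqrt T / 2 := by
      simp only [hc_def]; field_simp
    nlinarith [mul_nonneg (hc0 T) (ha0 (T+1))]
  have hηsum : ∑ t ∈ Finset.Icc 1 T, η t * G ^ 2 / 2 ≤ D * G * Real.sqrt T := by
    have heach : ∀ t ∈ Finset.Icc 1 T, η t * G ^ 2 / 2 = (D * G / 2) * (1 / Real.sqrt t) := by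
      intro t ht
      obtain ⟨ht1, _⟩ := Finset.mem_Icc.mp ht
      have hst : (0:ℝ) < Real.sqrt t := Real.sqrt_pos.mpr (by exact_mod_cast ht1)
      rw [hη t]; field_simp
    rw [Finset.sum_congr rfl heach, ← Finset.mul_sum]
    have := sum_inv_sqrt_le T
    calc (D * G / 2) * ∑ t ∈ Finset.Icc 1 T, (1 / Real.sqrt t)
        ≤ (D * G / 2) * (2 * Real.sqrt T) := by
          apply mul_le_mul_of_nonneg_left this (by positivity)
      _ = D * G * Real.sqrt T := by ring
  have htotal : ∑ t ∈ Finset.Icc 1 T, (l t (v t) - l t u)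
      ≤ (3/2) * D * G * Real.sqrt T := by
    rw [Finset.sum_add_distrib] at hsum
    linarith
  -- finish
  have hTpos : (0:ℝ) < T := by exact_mod_cast hT
  have hsT : (0:ℝ) < Real.sqrt T := Real.sqrt_pos.mpr hTpos
  have hsq : Real.sqrt (T:ℝ) * Real.sqrt (T:ℝ) = (T:ℝ) := Real.mul_self_sqrt (le_of_lt hTpos)
  rw [← mul_sub, ← Finset.sum_sub_distrib]
  have h1 : (1 / (T:ℝ)) * ∑ t ∈ Finset.Icc 1 T, (l t (v t) - l t u)
      ≤ (1 / (T:ℝ)) * ((3/2) * D * G * Real.sqrt T) := by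
    apply mul_le_mul_of_nonneg_left htotal (by positivity)
  have h2 : (1 / (T:ℝ)) * ((3/2) * D * G * Real.sqrt T) = 3 * D * G / (2 * Real.sqrt T) := by
    field_simp
    linear_combination hsq
  rw [← h2]
  exact h1
end

section
/- Let X be a finite set, Z a finite set, μ a probability distribution on X, and F a finite family of functions f : X × Z × Δ_Z → [−1,1], where Δ_Z is the probability simplex over Z. For any g : X → Δ_Z, if a sequence of functions h_1, h_2, ... : X → Δ_Z is produced such that at each step t there exists f_t ∈ F with |E_{x∼μ, z∼g(x)}[f_t(x,z,h_t(x))] − E_{x∼μ, z∼h_t(x)}[f_t(x,z,h_t(x))]| ≥ δ, then the embedded iterates of the corresponding online gradient descent procedure (with losses l_t(h) = |E_{x∼μ, z∼g(x)}[f_t(x,z,h(x))] − E_{x∼μ, z∼h(x)}[f_t(x,z,h(x))]|) can continue for at most T = O(|Z|/δ²) steps. -/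
open scoped BigOperators

lemma myExpandSq {X Z : Type*} [Fintype X] [Fintype Z] (μ : X → ℝ) (u w : X → Z → ℝ) (c : ℝ) :
    ∑ x, μ x * ∑ z, (u x z + c * w x z)^2
    = (∑ x, μ x * ∑ z, (u x z)^2) + 2*c*(∑ x, μ x * ∑ z, u x z * w x z)
      + c^2 * ∑ x, μ x * ∑ z, (w x z)^2 := by
  have hin : ∀ x, ∑ z, (u x z + c * w x z)^2
      = (∑ z, (u x z)^2) + 2*c*(∑ z, u x z * w x z) + c^2 * ∑ z, (w x z)^2 := by
    intro x
    rw [Finset.mul_sum, Finset.mul_sum, ← Finset.sum_add_distrib, ← Finset.sum_add_distrib]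
    exact Finset.sum_congr rfl fun z _ => by ring
  calc ∑ x, μ x * ∑ z, (u x z + c * w x z)^2
      = ∑ x, (μ x * ∑ z, (u x z)^2 + 2*c*(μ x * ∑ z, u x z * w x z)
          + c^2 * (μ x * ∑ z, (w x z)^2)) :=
        Finset.sum_congr rfl fun x _ => by rw [hin x]; ring
    _ = _ := by
        rw [Finset.sum_add_distrib, Finset.sum_add_distrib, ← Finset.mul_sum, ← Finset.mul_sum]

lemma myNonneg {X Z : Type*} [Fintype X] [Fintype Z] (μ : X → ℝ) (hμ0 : ∀ x, 0 ≤ μ x)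
    (u : X → Z → ℝ) : 0 ≤ ∑ x, μ x * ∑ z, (u x z)^2 :=
  Finset.sum_nonneg fun x _ => mul_nonneg (hμ0 x) (Finset.sum_nonneg fun z _ => sq_nonneg _)

lemma myKeyStep {X Z : Type*} [Fintype X] [Fintype Z]
    (μ : X → ℝ) (hμ0 : ∀ x, 0 ≤ μ x) (hμ1 : ∑ x, μ x = 1)
    (g h0 h1 : X → Z → ℝ) (hg0 : ∀ x z, 0 ≤ g x z) (hg1 : ∀ x, ∑ z, g x z = 1)
    (h1simp : ∀ x, (∀ z, 0 ≤ h1 x z) ∧ ∑ z, h1 x z = 1)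
    (F' : X → Z → ℝ) (hF : ∀ x z, |F' x z| ≤ 1) (c : ℝ)
    (hupd : ∀ h' : X → Z → ℝ, (∀ x, (∀ z, 0 ≤ h' x z) ∧ ∑ z, h' x z = 1) →
      ∑ x, μ x * ∑ z, (h1 x z - (h0 x z + c * F' x z))^2
        ≤ ∑ x, μ x * ∑ z, (h' x z - (h0 x z + c * F' x z))^2) :
    ∑ x, μ x * ∑ z, (h1 x z - g x z)^2
      ≤ (∑ x, μ x * ∑ z, (h0 x z - g x z)^2)
        - 2*c*(∑ x, μ x * ∑ z, (g x z - h0 x z) * F' x z)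
        + c^2 * (Fintype.card Z : ℝ) := by
  set Q : ℝ := ∑ x, μ x * ∑ z, (g x z - h1 x z)^2 with hQdef
  set C : ℝ := ∑ x, μ x * ∑ z, (h1 x z - (h0 x z + c * F' x z)) * (g x z - h1 x z) with hCdef
  set R : ℝ := ∑ x, μ x * ∑ z, (h1 x z - (h0 x z + c * F' x z))^2 with hRdef
  -- projection-style inequality: C ≥ 0
  have hlam : ∀ lam : ℝ, 0 < lam → lam ≤ 1 → 0 ≤ 2*lam*C + lam^2*Q := by
    intro lam hl0 hl1
    have hsimp' : ∀ x, (∀ z, 0 ≤ h1 x z + lam * (g x z - h1 x z)) ∧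
        ∑ z, (h1 x z + lam * (g x z - h1 x z)) = 1 := by
      intro x
      constructor
      · intro z; nlinarith [(h1simp x).1 z, hg0 x z]
      · rw [Finset.sum_add_distrib, ← Finset.mul_sum, Finset.sum_sub_distrib,
          (h1simp x).2, hg1 x]; ring
    have H := hupd _ hsimp'
    have expand : ∑ x, μ x * ∑ z,
        ((h1 x z + lam * (g x z - h1 x z)) - (h0 x z + c * F' x z))^2
        = R + 2*lam*C + lam^2*Q := by
      have E := myExpandSq μ (fun x z => h1 x z - (h0 x z + c * F' x z))
        (fun x z => g x z - h1 x z) lam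
      calc ∑ x, μ x * ∑ z, ((h1 x z + lam * (g x z - h1 x z)) - (h0 x z + c * F' x z))^2
          = ∑ x, μ x * ∑ z,
            ((h1 x z - (h0 x z + c * F' x z)) + lam * (g x z - h1 x z))^2 := by
            refine Finset.sum_congr rfl fun x _ => ?_
            congr 1
            exact Finset.sum_congr rfl fun z _ => by ring
        _ = R + 2*lam*C + lam^2*Q := E
    rw [expand] at H
    linarith
  have hQ : 0 ≤ Q := myNonneg μ hμ0 _
  have hC : 0 ≤ C := by
    by_contra hc
    push_neg at hc
    rcases eq_or_lt_of_le hQ with hQ0 | hQpos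
    · have := hlam 1 one_pos le_rfl
      nlinarith
    · have hl0 : 0 < min 1 (-C/Q) := lt_min one_pos (div_pos (neg_pos.2 hc) hQpos)
      have := hlam _ hl0 (min_le_left _ _)
      have hlQ : min 1 (-C/Q) * Q ≤ -C := by
        rw [← le_div_iff₀ hQpos]
        exact min_le_right _ _
      nlinarith
  -- expansion of ‖g - v‖²
  have claim3 : ∑ x, μ x * ∑ z, (g x z - (h0 x z + c * F' x z))^2 = Q + 2*C + R := by
    have E := myExpandSq μ (fun x z => g x z - h1 x z)
      (fun x z => h1 x z - (h0 x z + c * F' x z)) 1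
    calc ∑ x, μ x * ∑ z, (g x z - (h0 x z + c * F' x z))^2
        = ∑ x, μ x * ∑ z,
          ((g x z - h1 x z) + 1 * (h1 x z - (h0 x z + c * F' x z)))^2 := by
          refine Finset.sum_congr rfl fun x _ => ?_
          congr 1
          exact Finset.sum_congr rfl fun z _ => by ring
      _ = Q + 2*1*(∑ x, μ x * ∑ z, (g x z - h1 x z) * (h1 x z - (h0 x z + c * F' x z)))
          + 1^2 * R := E
      _ = Q + 2*C + R := by
          have : (∑ x, μ x * ∑ z, (g x z - h1 x z) * (h1 x z - (h0 x z + c * F' x z))) = C := by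
            refine Finset.sum_congr rfl fun x _ => ?_
            congr 1
            exact Finset.sum_congr rfl fun z _ => by ring
          rw [this]; ring
  have claim4 : ∑ x, μ x * ∑ z, (g x z - (h0 x z + c * F' x z))^2
      = (∑ x, μ x * ∑ z, (h0 x z - g x z)^2)
        - 2*c*(∑ x, μ x * ∑ z, (g x z - h0 x z) * F' x z)
        + c^2 * ∑ x, μ x * ∑ z, (F' x z)^2 := by
    have E := myExpandSq μ (fun x z => g x z - h0 x z) F' (-c)
    calc ∑ x, μ x * ∑ z, (g x z - (h0 x z + c * F' x z))^2
        = ∑ x, μ x * ∑ z, ((g x z - h0 x z) + (-c) * F' x z)^2 := by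
          refine Finset.sum_congr rfl fun x _ => ?_
          congr 1
          exact Finset.sum_congr rfl fun z _ => by ring
      _ = _ := E
      _ = _ := by
          have : (∑ x, μ x * ∑ z, (g x z - h0 x z)^2) = ∑ x, μ x * ∑ z, (h0 x z - g x z)^2 := by
            refine Finset.sum_congr rfl fun x _ => ?_
            congr 1
            exact Finset.sum_congr rfl fun z _ => by ring
          rw [this]; ring
  have claim5 : ∑ x, μ x * ∑ z, (F' x z)^2 ≤ (Fintype.card Z : ℝ) := by
    calc ∑ x, μ x * ∑ z, (F' x z)^2 ≤ ∑ x, μ x * (Fintype.card Z : ℝ) := by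
          refine Finset.sum_le_sum fun x _ => ?_
          refine mul_le_mul_of_nonneg_left ?_ (hμ0 x)
          calc ∑ z, (F' x z)^2 ≤ ∑ z : Z, (1:ℝ) := by
                refine Finset.sum_le_sum fun z _ => ?_
                have := hF x z
                nlinarith [abs_nonneg (F' x z), sq_abs (F' x z)]
            _ = (Fintype.card Z : ℝ) := by simp
      _ = (Fintype.card Z : ℝ) := by rw [← Finset.sum_mul, hμ1, one_mul]
  have claim2 : ∑ x, μ x * ∑ z, (h1 x z - g x z)^2 = Q := by
    refine Finset.sum_congr rfl fun x _ => ?_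
    congr 1
    exact Finset.sum_congr rfl fun z _ => by ring
  have hR : 0 ≤ R := myNonneg μ hμ0 _
  rw [claim2]
  have := claim3 ▸ claim4
  nlinarith [sq_nonneg c]

lemma myAbel (a b : ℕ → ℝ) (ha0 : ∀ t, 0 ≤ a t) (ha2 : ∀ t, a t ≤ 2)
    (hb : Monotone b) (hb0 : b 0 = 0) (T : ℕ) :
    ∑ t ∈ Finset.Icc 1 T, (a t - a (t+1)) * b t ≤ 2 * b T - a (T+1) * b T := by
  induction T with
  | zero => simp [hb0]
  | succ n ih =>
    rw [Finset.sum_Icc_succ_top (by omega : 1 ≤ n+1)]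
    have h1 : b n ≤ b (n+1) := hb (by omega)
    have h2 : 0 ≤ b n := hb0 ▸ hb (Nat.zero_le n)
    nlinarith [ha0 (n+1), ha0 (n+2), ha2 (n+1), ha2 (n+2),
      mul_nonneg (sub_nonneg.2 (ha2 (n+1))) (sub_nonneg.2 h1)]

lemma mySqrtSum (T : ℕ) : ∑ t ∈ Finset.Icc 1 T, 1/Real.sqrt t ≤ 2 * Real.sqrt T := by
  induction T with
  | zero => simp
  | succ n ih =>
    rw [Finset.sum_Icc_succ_top (by omega : 1 ≤ n+1)]
    have h1 : (0:ℝ) < Real.sqrt (n+1) := Real.sqrt_pos.2 (by positivity)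
    have h2 : Real.sqrt n ≤ Real.sqrt (n+1) := Real.sqrt_le_sqrt (by push_cast; linarith)
    have h3 : Real.sqrt (n+1) * Real.sqrt (n+1) = (n:ℝ)+1 := Real.mul_self_sqrt (by positivity)
    have h4 : Real.sqrt n * Real.sqrt n = (n:ℝ) := Real.mul_self_sqrt (by positivity)
    have key : 1/Real.sqrt ((n:ℝ)+1) ≤ 2*Real.sqrt ((n:ℝ)+1) - 2*Real.sqrt n := by
      rw [div_le_iff₀ h1]; nlinarith
    push_cast
    linarith

/-- **Step-count bound for the indistinguishability algorithm.** Distributions on `Z` are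
represented by functions `X → Z → ℝ` that are pointwise nonnegative and sum to `1`. The
iterates `h t` follow online gradient descent in the `μ`-weighted Euclidean geometry:
`h (t+1)` is the projection (onto simplex-valued functions) of the gradient step
`h t + η t · sign(Adv t) · f t`, with step sizes `η t = 1/(√|Z|·√t)` (from diameter
`D ≤ 2` and gradient bound `G ≤ 2√|Z|`). If at each step `1 ≤ t ≤ T` some test function
`f t ∈ F` (bounded by `1`) attains advantage `|Adv t| ≥ δ` in distinguishing `h t` from
`g`, then the procedure can continue for at most `T ≤ 9·|Z|/δ²` steps. -/
theorem indistinguishability_step_bound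
    {X Z : Type*} [Fintype X] [Fintype Z] [Nonempty Z]
    (μ : X → ℝ) (hμ0 : ∀ x, 0 ≤ μ x) (hμ1 : ∑ x, μ x = 1)
    (g : X → Z → ℝ) (hg0 : ∀ x z, 0 ≤ g x z) (hg1 : ∀ x, ∑ z, g x z = 1)
    (F : Set (X → Z → (Z → ℝ) → ℝ))
    (δ : ℝ) (hδ : 0 < δ) (T : ℕ)
    (h : ℕ → X → Z → ℝ)
    (hsimplex : ∀ t x, (∀ z, 0 ≤ h t x z) ∧ ∑ z, h t x z = 1)
    (f : ℕ → X → Z → (Z → ℝ) → ℝ)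
    (hfF : ∀ t ∈ Finset.Icc 1 T, f t ∈ F)
    (hfbdd : ∀ t ∈ Finset.Icc 1 T, ∀ x z pz, |f t x z pz| ≤ 1)
    (Adv : ℕ → ℝ)
    (hAdv : ∀ t, Adv t =
      (∑ x, μ x * ∑ z, g x z * f t x z (h t x))
        - ∑ x, μ x * ∑ z, h t x z * f t x z (h t x))
    (hbig : ∀ t ∈ Finset.Icc 1 T, δ ≤ |Adv t|)
    (η : ℕ → ℝ)
    (hη : ∀ t, η t = 1 / (Real.sqrt (Fintype.card Z) * Real.sqrt t))
    (hupdate : ∀ t ∈ Finset.Icc 1 T, ∀ h' : X → Z → ℝ,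
      (∀ x, (∀ z, 0 ≤ h' x z) ∧ ∑ z, h' x z = 1) →
      ∑ x, μ x * ∑ z,
          (h (t + 1) x z - (h t x z + η t * Real.sign (Adv t) * f t x z (h t x))) ^ 2
        ≤ ∑ x, μ x * ∑ z,
          (h' x z - (h t x z + η t * Real.sign (Adv t) * f t x z (h t x))) ^ 2) :
    (T : ℝ) ≤ 9 * Fintype.card Z / δ ^ 2 := by
  have key : ∀ t ∈ Finset.Icc 1 T,
      (∑ x, μ x * ∑ z, (h (t+1) x z - g x z)^2)
        ≤ (∑ x, μ x * ∑ z, (h t x z - g x z)^2) - 2 * η t * δ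
          + η t ^ 2 * (Fintype.card Z : ℝ) := by
    intro t ht
    have hδA := hbig t ht
    have hAne : Adv t ≠ 0 := by
      intro h0
      rw [h0, abs_zero] at hδA
      linarith
    have hsign : Real.sign (Adv t) * Adv t = |Adv t| ∧
        Real.sign (Adv t) * Real.sign (Adv t) = 1 := by
      rcases lt_trichotomy (Adv t) 0 with hlt | heq | hgt
      · rw [Real.sign_of_neg hlt, abs_of_neg hlt]; constructor <;> ring
      · exact absurd heq hAne
      · rw [Real.sign_of_pos hgt, abs_of_pos hgt]; constructor <;> ring
    have hη0 : 0 ≤ η t := by rw [hη t]; positivity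
    have hKS := myKeyStep μ hμ0 hμ1 g (h t) (h (t+1)) hg0 hg1 (hsimplex (t+1))
      (fun x z => f t x z (h t x)) (fun x z => hfbdd t ht x z (h t x))
      (η t * Real.sign (Adv t)) (hupdate t ht)
    have hcross : (∑ x, μ x * ∑ z, (g x z - h t x z) * f t x z (h t x)) = Adv t := by
      rw [hAdv t, ← Finset.sum_sub_distrib]
      refine Finset.sum_congr rfl fun x _ => ?_
      rw [← mul_sub, ← Finset.sum_sub_distrib]
      congr 1
      exact Finset.sum_congr rfl fun z _ => by ring
    rw [hcross] at hKS
    have e1 : 2*(η t * Real.sign (Adv t))*Adv t = 2 * η t * |Adv t| := by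
      rw [← hsign.1]; ring
    have e2 : (η t * Real.sign (Adv t))^2 = η t ^ 2 := by
      have := hsign.2; nlinarith
    rw [e1, e2] at hKS
    have : 2 * η t * δ ≤ 2 * η t * |Adv t| :=
      mul_le_mul_of_nonneg_left hδA (by linarith)
    linarith

  set K : ℝ := (Fintype.card Z : ℝ) with hKdef
  have hK1 : (1:ℝ) ≤ K := by
    have : 0 < Fintype.card Z := Fintype.card_pos
    simp only [hKdef]
    exact_mod_cast this
  have hK0 : (0:ℝ) < K := lt_of_lt_of_le one_pos hK1
  have hsK : 0 < Real.sqrt K := Real.sqrt_pos.2 hK0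
  have hKs : Real.sqrt K * Real.sqrt K = K := Real.mul_self_sqrt hK0.le
  set A : ℕ → ℝ := fun t => ∑ x, μ x * ∑ z, (h t x z - g x z)^2 with hAdef
  have hA0 : ∀ t, 0 ≤ A t := fun t =>
    Finset.sum_nonneg fun x _ => mul_nonneg (hμ0 x) (Finset.sum_nonneg fun z _ => sq_nonneg _)
  have hA2 : ∀ t, A t ≤ 2 := by
    intro t
    have hb : ∀ x, ∑ z, (h t x z - g x z)^2 ≤ 2 := by
      intro x
      have h1 : ∀ z, (h t x z - g x z)^2 ≤ h t x z + g x z := by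
        intro z
        have hz1 : h t x z ≤ 1 := by
          have := Finset.single_le_sum (f := fun z => h t x z)
            (fun z _ => (hsimplex t x).1 z) (Finset.mem_univ z)
          rw [(hsimplex t x).2] at this; exact this
        have hz2 : g x z ≤ 1 := by
          have := Finset.single_le_sum (f := fun z => g x z)
            (fun z _ => hg0 x z) (Finset.mem_univ z)
          rw [hg1 x] at this; exact this
        nlinarith [(hsimplex t x).1 z, hg0 x z]
      calc ∑ z, (h t x z - g x z)^2 ≤ ∑ z, (h t x z + g x z) := Finset.sum_le_sum fun z _ => h1 z
        _ = 2 := by rw [Finset.sum_add_distrib, (hsimplex t x).2, hg1 x]; norm_num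
    calc A t ≤ ∑ x, μ x * 2 :=
          Finset.sum_le_sum fun x _ => mul_le_mul_of_nonneg_left (hb x) (hμ0 x)
      _ = 2 := by rw [← Finset.sum_mul, hμ1, one_mul]
  set b : ℕ → ℝ := fun t => Real.sqrt K * Real.sqrt t / 2 with hbdef
  have hbmono : Monotone b := by
    intro m n hmn
    have : Real.sqrt m ≤ Real.sqrt n := Real.sqrt_le_sqrt (by exact_mod_cast hmn)
    simp only [hbdef]
    nlinarith
  have hb0 : b 0 = 0 := by simp [hbdef]
  have key2 : ∀ t ∈ Finset.Icc 1 T,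
      δ ≤ (A t - A (t+1)) * b t + (1/Real.sqrt t) * (Real.sqrt K / 2) := by
    intro t ht
    have ht1 : 1 ≤ t := (Finset.mem_Icc.1 ht).1
    have htR : (1:ℝ) ≤ (t:ℝ) := by exact_mod_cast ht1
    have hst : 0 < Real.sqrt t := Real.sqrt_pos.2 (by linarith)
    have hts : Real.sqrt t * Real.sqrt t = (t:ℝ) := Real.mul_self_sqrt (by linarith)
    have hk := key t ht
    rw [hη t] at hk
    have hη2 : (1 / (Real.sqrt K * Real.sqrt t))^2 * K = 1/(t:ℝ) := by
      rw [div_pow, one_pow, mul_pow]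
      rw [sq, sq, hKs, hts]
      field_simp
    rw [hη2] at hk
    -- hk : A (t+1) ≤ A t - 2 * (1/(√K √t)) * δ + 1/t
    have key' : 2 * (1/(Real.sqrt K * Real.sqrt t)) * δ ≤ (A t - A (t+1)) + 1/(t:ℝ) := by
      linarith
    have hpos : (0:ℝ) ≤ Real.sqrt K * Real.sqrt t / 2 := by positivity
    have H := mul_le_mul_of_nonneg_right key' hpos
    calc δ = (2 * (1/(Real.sqrt K * Real.sqrt t)) * δ) * (Real.sqrt K * Real.sqrt t / 2) := by
          field_simp
      _ ≤ ((A t - A (t+1)) + 1/(t:ℝ)) * (Real.sqrt K * Real.sqrt t / 2) := H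
      _ = (A t - A (t+1)) * b t + (1/(t:ℝ)) * (Real.sqrt K * Real.sqrt t / 2) := by
          simp only [hbdef]; ring
      _ = (A t - A (t+1)) * b t + (1/Real.sqrt t) * (Real.sqrt K / 2) := by
          congr 1
          field_simp
          nlinarith [Real.sqrt_nonneg K]
  have sum1 : (T:ℝ) * δ ≤ ∑ t ∈ Finset.Icc 1 T,
      ((A t - A (t+1)) * b t + (1/Real.sqrt t) * (Real.sqrt K / 2)) := by
    have := Finset.sum_le_sum key2
    simpa [Nat.card_Icc, mul_comm] using this
  have sum2 : ∑ t ∈ Finset.Icc 1 T, ((A t - A (t+1)) * b t + (1/Real.sqrt t) * (Real.sqrt K / 2))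
      ≤ 2 * Real.sqrt K * Real.sqrt T := by
    rw [Finset.sum_add_distrib]
    have p1 : ∑ t ∈ Finset.Icc 1 T, (A t - A (t+1)) * b t ≤ Real.sqrt K * Real.sqrt T := by
      have := myAbel A b hA0 hA2 hbmono hb0 T
      have hbT : 0 ≤ b T := hb0 ▸ hbmono (Nat.zero_le T)
      have : ∑ t ∈ Finset.Icc 1 T, (A t - A (t+1)) * b t ≤ 2 * b T := by
        nlinarith [hA0 (T+1), mul_nonneg (hA0 (T+1)) hbT]
      calc ∑ t ∈ Finset.Icc 1 T, (A t - A (t+1)) * b t ≤ 2 * b T := this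
        _ = Real.sqrt K * Real.sqrt T := by simp only [hbdef]; ring
    have p2 : ∑ t ∈ Finset.Icc 1 T, (1/Real.sqrt t) * (Real.sqrt K / 2)
        ≤ Real.sqrt K * Real.sqrt T := by
      rw [← Finset.sum_mul]
      have := mySqrtSum T
      calc (∑ t ∈ Finset.Icc 1 T, 1/Real.sqrt t) * (Real.sqrt K / 2)
          ≤ (2 * Real.sqrt T) * (Real.sqrt K / 2) := by
            apply mul_le_mul_of_nonneg_right this (by positivity)
        _ = Real.sqrt K * Real.sqrt T := by ring
    linarith
  -- conclude
  have final : (T:ℝ) * δ ≤ 2 * Real.sqrt K * Real.sqrt T := le_trans sum1 sum2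
  have hTs : Real.sqrt T * Real.sqrt T = (T:ℝ) := Real.mul_self_sqrt (by positivity)
  have hT0 : (0:ℝ) ≤ T := by positivity
  have hsT : 0 ≤ Real.sqrt T := Real.sqrt_nonneg _
  have hsq : (T:ℝ) * δ^2 ≤ 4 * K := by
    rcases Nat.eq_zero_or_pos T with hT | hT
    · simp [hT]; positivity
    · have hTpos : (0:ℝ) < T := by exact_mod_cast hT
      have h2 : ((T:ℝ)*δ)*((T:ℝ)*δ) ≤ (2*Real.sqrt K*Real.sqrt T)*(2*Real.sqrt K*Real.sqrt T) :=
        mul_self_le_mul_self (by positivity) final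
      have h3 : (2*Real.sqrt K*Real.sqrt T)*(2*Real.sqrt K*Real.sqrt T) = 4*K*(T:ℝ) := by
        calc (2*Real.sqrt K*Real.sqrt T)*(2*Real.sqrt K*Real.sqrt T)
            = 4*(Real.sqrt K*Real.sqrt K)*(Real.sqrt T*Real.sqrt T) := by ring
          _ = 4*K*(T:ℝ) := by rw [hKs, hTs]
      rw [h3] at h2
      have h4 : ((T:ℝ) * δ^2) * T ≤ (4*K) * T := by nlinarith
      exact le_of_mul_le_mul_right h4 hTpos
  rw [le_div_iff₀ (by positivity : (0:ℝ) < δ^2)]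
  linarith
end
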